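/- Let h : I → I be a homeomorphism of the unit interval, and let h_u be the restriction to S_u of the Stone–Čech extension of the map 𝐒 → 𝐒, (n,x,y) ↦ (n,h(x),y). Then h_u is a homeomorphism of S_u onto itself, it permutes the fibers of f_u (namely h_u[f_u⁻¹(t)] = f_u⁻¹(h(t)) for every t ∈ I), and h_u[X_α] = X_α for every ordinal α. -/

import Mathlib

open Set Topology

noncomputable section

/-- A set is an `Fσ` set if it is a countable union of closed sets. -/
def IsFSigma {X : Type*} [TopologicalSpace X] (s : Set X) : Prop :=
  ∃ F : ℕ → Set X, (∀ n, IsClosed (F n)) ∧ s = ⋃ n, F n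

/-- A topological space is an `F`-space if any two disjoint open `Fσ` subsets
have disjoint closures. -/
def IsFSpace (X : Type*) [TopologicalSpace X] : Prop :=
  ∀ s t : Set X, IsOpen s → IsOpen t → IsFSigma s → IsFSigma t → Disjoint s t →
    Disjoint (closure s) (closure t)

/-- `𝐒 = ℕ × [0,1]²` where `ℕ` is discrete and `[0,1]` is the unit interval. -/
abbrev bS : Type := ℕ × (unitInterval × unitInterval)

/-- `βπ : β𝐒 → βℕ`, the Stone–Čech extension of the projection `π(n,x,y) = n`. -/
def betaPi : StoneCech bS → StoneCech ℕ :=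
  stoneCechExtend (continuous_stoneCechUnit.comp continuous_fst)

/-- `βf : β𝐒 → [0,1]`, the Stone–Čech extension of `f(n,x,y) = x`. -/
def betaF : StoneCech bS → unitInterval :=
  stoneCechExtend (continuous_fst.comp continuous_snd)

/-- `S_u = βπ⁻¹(u)`, as a subset of `β𝐒` (carrying the subspace topology). -/
def Su (u : StoneCech ℕ) : Set (StoneCech bS) := betaPi ⁻¹' {u}

/-- `f_u : S_u → [0,1]`, the restriction of `βf` to `S_u`. -/
def fu (u : StoneCech ℕ) : (Su u) → unitInterval := fun z => betaF z.1

/-- `L_t = f_u⁻¹(t) ∩ cl_{S_u} f_u⁻¹([0,t))`. -/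
def Lset (u : StoneCech ℕ) (t : unitInterval) : Set (Su u) :=
  fu u ⁻¹' {t} ∩ closure (fu u ⁻¹' (Set.Ico 0 t))

/-- `R_t = f_u⁻¹(t) ∩ cl_{S_u} f_u⁻¹((t,1])`. -/
def Rset (u : StoneCech ℕ) (t : unitInterval) : Set (Su u) :=
  fu u ⁻¹' {t} ∩ closure (fu u ⁻¹' (Set.Ioc t 1))

/-- The rectangle `P_{s,r} = S_u ∩ cl_{β𝐒}(ℕ × [s,r] × I)`, viewed as a subset of `S_u`. -/
def Pset (u : StoneCech ℕ) (s r : unitInterval) : Set (Su u) :=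
  Subtype.val ⁻¹' closure (stoneCechUnit '' {p : bS | p.2.1 ∈ Set.Icc s r})

/-- `L_{s,t} = cl_{S_u}(⋃_{s<r<t} P_{s,r})`. -/
def Lst (u : StoneCech ℕ) (s t : unitInterval) : Set (Su u) :=
  closure (⋃ r ∈ Set.Ioo s t, Pset u s r)

/-- The interior of `B` in the subspace `A`, viewed as a subset of the ambient space. -/
def relInt {Y : Type*} [TopologicalSpace Y] (A B : Set Y) : Set Y :=
  Subtype.val '' interior ((Subtype.val : A → Y) ⁻¹' B)

/-- The transfinite sequence `X_α ⊆ S_u`: `X_0 = S_u`,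
`X_{α+1} = X_α \ ⋃_{t} Int_{X_α}(X_α ∩ f_u⁻¹(t))`, and `X_λ = ⋂_{β<λ} X_β` at limits. -/
def Xseq (u : StoneCech ℕ) : Ordinal → Set (Su u) := fun α =>
  Ordinal.limitRecOn α Set.univ
    (fun _ Xa => Xa \ ⋃ t : unitInterval, relInt Xa (Xa ∩ fu u ⁻¹' {t}))
    (fun o _ ih => ⋂ (β : {β : Ordinal // β < o}), ih β.1 β.2)

/-- The bottom line `B_u = S_u ∩ cl_{β𝐒}(ℕ × I × {0})`, viewed as a subset of `S_u`. -/
def Bu (u : StoneCech ℕ) : Set (Su u) :=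
  Subtype.val ⁻¹' closure (stoneCechUnit '' {p : bS | p.2.2 = 0})

/-- The top line `T_u = S_u ∩ cl_{β𝐒}(ℕ × I × {1})`, viewed as a subset of `S_u`. -/
def Tu (u : StoneCech ℕ) : Set (Su u) :=
  Subtype.val ⁻¹' closure (stoneCechUnit '' {p : bS | p.2.2 = 1})

/-- The map `𝐒 → 𝐒`, `(n,x,y) ↦ (n, h x, y)`, induced by `h : I → I`. -/
def gMap (h : unitInterval ≃ₜ unitInterval) : bS → bS :=
  fun p => (p.1, (h p.2.1, p.2.2))

lemma gMap_continuous (h : unitInterval ≃ₜ unitInterval) :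
    Continuous (stoneCechUnit ∘ gMap h) :=
  continuous_stoneCechUnit.comp
    (continuous_fst.prodMk
      ((h.continuous.comp (continuous_fst.comp continuous_snd)).prodMk
        (continuous_snd.comp continuous_snd)))

/-- `βg : β𝐒 → β𝐒`, the Stone–Čech extension of `(n,x,y) ↦ (n, h x, y)`. -/
def betaG (h : unitInterval ≃ₜ unitInterval) : StoneCech bS → StoneCech bS :=
  stoneCechExtend (gMap_continuous h)

-- Auxiliary lemmas

lemma betaPi_betaG (h : unitInterval ≃ₜ unitInterval) (z : StoneCech bS) :
    betaPi (betaG h z) = betaPi z := by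
  have key : betaPi ∘ betaG h = betaPi := by
    apply stoneCech_hom_ext
    · exact (continuous_stoneCechExtend _).comp (continuous_stoneCechExtend _)
    · exact continuous_stoneCechExtend _
    · funext p
      have e1 : betaG h (stoneCechUnit p) = stoneCechUnit (gMap h p) :=
        congrFun (stoneCechExtend_extends (gMap_continuous h)) p
      have e2 : betaPi (stoneCechUnit (gMap h p)) = stoneCechUnit (gMap h p).1 :=
        congrFun (stoneCechExtend_extends _) (gMap h p)
      have e3 : betaPi (stoneCechUnit p) = stoneCechUnit p.1 :=
        congrFun (stoneCechExtend_extends _) p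
      show betaPi (betaG h (stoneCechUnit p)) = betaPi (stoneCechUnit p)
      rw [e1, e2, e3]
      rfl
  exact congrFun key z

lemma gMap_symm_gMap (h : unitInterval ≃ₜ unitInterval) (p : bS) :
    gMap h.symm (gMap h p) = p := by
  simp [gMap]

lemma betaG_symm_betaG (h : unitInterval ≃ₜ unitInterval) (z : StoneCech bS) :
    betaG h.symm (betaG h z) = z := by
  have key : betaG h.symm ∘ betaG h = id := by
    apply stoneCech_hom_ext
    · exact (continuous_stoneCechExtend _).comp (continuous_stoneCechExtend _)
    · exact continuous_id
    · funext p
      have e1 : betaG h (stoneCechUnit p) = stoneCechUnit (gMap h p) :=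
        congrFun (stoneCechExtend_extends (gMap_continuous h)) p
      have e2 : betaG h.symm (stoneCechUnit (gMap h p)) = stoneCechUnit (gMap h.symm (gMap h p)) :=
        congrFun (stoneCechExtend_extends (gMap_continuous h.symm)) (gMap h p)
      simp only [Function.comp_apply, e1, e2, gMap_symm_gMap, id_eq]
  exact congrFun key z

lemma betaF_betaG (h : unitInterval ≃ₜ unitInterval) (z : StoneCech bS) :
    betaF (betaG h z) = h (betaF z) := by
  have key : betaF ∘ betaG h = h ∘ betaF := by
    apply stoneCech_hom_ext
    · exact (continuous_stoneCechExtend _).comp (continuous_stoneCechExtend _)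
    · exact h.continuous.comp (continuous_stoneCechExtend _)
    · funext p
      have e1 : betaG h (stoneCechUnit p) = stoneCechUnit (gMap h p) :=
        congrFun (stoneCechExtend_extends (gMap_continuous h)) p
      have e2 : betaF (stoneCechUnit (gMap h p)) = (gMap h p).2.1 :=
        congrFun (stoneCechExtend_extends _) (gMap h p)
      have e3 : betaF (stoneCechUnit p) = p.2.1 :=
        congrFun (stoneCechExtend_extends _) p
      show betaF (betaG h (stoneCechUnit p)) = h (betaF (stoneCechUnit p))
      rw [e1, e2, e3]
      rfl
  exact congrFun key z

/-- The homeomorphism `h_u : S_u ≃ₜ S_u`. -/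
def eHom (u : StoneCech ℕ) (h : unitInterval ≃ₜ unitInterval) : (Su u) ≃ₜ (Su u) where
  toFun z := ⟨betaG h z.1, by
    have hz : betaPi z.1 = u := z.2
    show betaPi (betaG h z.1) = u
    rw [betaPi_betaG, hz]⟩
  invFun z := ⟨betaG h.symm z.1, by
    have hz : betaPi z.1 = u := z.2
    show betaPi (betaG h.symm z.1) = u
    rw [betaPi_betaG, hz]⟩
  left_inv z := Subtype.ext (betaG_symm_betaG h z.1)
  right_inv z := Subtype.ext (by
    have key := betaG_symm_betaG h.symm z.1
    rwa [Homeomorph.symm_symm] at key)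
  continuous_toFun := by
    exact Continuous.subtype_mk ((continuous_stoneCechExtend _).comp continuous_subtype_val) _
  continuous_invFun := by
    exact Continuous.subtype_mk ((continuous_stoneCechExtend _).comp continuous_subtype_val) _

lemma fu_eHom (u : StoneCech ℕ) (h : unitInterval ≃ₜ unitInterval) (z : Su u) :
    fu u (eHom u h z) = h (fu u z) := betaF_betaG h z.1

lemma eHom_symm (u : StoneCech ℕ) (h : unitInterval ≃ₜ unitInterval) :
    (eHom u h).symm = eHom u h.symm := rfl

lemma mem_image_eHom (u : StoneCech ℕ) (h : unitInterval ≃ₜ unitInterval)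
    (S : Set (Su u)) (z : Su u) : z ∈ (eHom u h) '' S ↔ (eHom u h).symm z ∈ S := by
  constructor
  · rintro ⟨a, ha, rfl⟩; simpa using ha
  · intro hz; exact ⟨(eHom u h).symm z, hz, by simp⟩

lemma eHom_fiber (u : StoneCech ℕ) (h : unitInterval ≃ₜ unitInterval) (t : unitInterval) :
    (eHom u h) '' (fu u ⁻¹' {t}) = fu u ⁻¹' {h t} := by
  ext z
  rw [mem_image_eHom]
  simp only [mem_preimage, mem_singleton_iff, eHom_symm]
  rw [fu_eHom u h.symm z]
  constructor
  · intro hz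
    have : h (h.symm (fu u z)) = h t := by rw [hz]
    simpa using this
  · intro hz; rw [hz]; simp

/-- Membership characterization of `relInt`. -/
lemma mem_relInt {Y : Type*} [TopologicalSpace Y] (A B : Set Y) (y : Y) :
    y ∈ relInt A B ↔ y ∈ A ∧ ∃ U : Set Y, IsOpen U ∧ y ∈ U ∧ A ∩ U ⊆ B := by
  constructor
  · rintro ⟨⟨a, haA⟩, ha, rfl⟩
    refine ⟨haA, ?_⟩
    rcases mem_interior.1 ha with ⟨V, hVB, hVopen, haV⟩
    rcases isOpen_induced_iff.1 hVopen with ⟨U, hUopen, rfl⟩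
    exact ⟨U, hUopen, haV, fun z hz => hVB (show (⟨z, hz.1⟩ : A) ∈ _ from hz.2)⟩
  · rintro ⟨hyA, U, hUopen, hyU, hU⟩
    refine ⟨⟨y, hyA⟩, ?_, rfl⟩
    apply mem_interior.2
    refine ⟨(Subtype.val : A → Y) ⁻¹' U, ?_, hUopen.preimage continuous_subtype_val, hyU⟩
    rintro ⟨z, hzA⟩ hz
    exact hU ⟨hzA, hz⟩

lemma image_relInt {Y : Type*} [TopologicalSpace Y] (e : Y ≃ₜ Y) (A B : Set Y) :
    e '' relInt A B = relInt (e '' A) (e '' B) := by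
  have key : ∀ (w : Y) (S : Set Y), w ∈ e '' S ↔ e.symm w ∈ S := by
    intro w S
    constructor
    · rintro ⟨a, ha, rfl⟩; simpa using ha
    · intro hw; exact ⟨e.symm w, hw, by simp⟩
  ext y
  rw [key, mem_relInt, mem_relInt]
  constructor
  · rintro ⟨hA, U, hUopen, hyU, hU⟩
    refine ⟨(key y A).2 hA, e '' U, ?_, (key y U).2 hyU, ?_⟩
    · rw [Homeomorph.isOpen_image]; exact hUopen
    · rintro z ⟨hzA, hzU⟩
      rw [key] at hzA hzU ⊢
      exact hU ⟨hzA, hzU⟩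
  · rintro ⟨hA, U, hUopen, hyU, hU⟩
    refine ⟨(key y A).1 hA, e ⁻¹' U, hUopen.preimage e.continuous, by simpa using hyU, ?_⟩
    rintro z ⟨hzA, hzU⟩
    have h1 : e z ∈ e '' A := ⟨z, hzA, rfl⟩
    have h2 : e z ∈ e '' B := hU ⟨h1, hzU⟩
    rw [key] at h2
    simpa using h2

lemma Xseq_zero (u : StoneCech ℕ) : Xseq u 0 = Set.univ := by
  simp [Xseq]

lemma Xseq_succ (u : StoneCech ℕ) (α : Ordinal) :
    Xseq u (Order.succ α) =
      Xseq u α \ ⋃ t : unitInterval, relInt (Xseq u α) (Xseq u α ∩ fu u ⁻¹' {t}) := by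
  simp [Xseq]

lemma Xseq_limit (u : StoneCech ℕ) (o : Ordinal) (ho : Order.IsSuccLimit o) :
    Xseq u o = ⋂ (β : {β : Ordinal // β < o}), Xseq u β.1 := by
  exact Ordinal.limitRecOn_limit _ _ _ _ ho

/-- The restriction `h_u` to `S_u` of the Stone–Čech extension of `(n,x,y) ↦ (n,h(x),y)`
is a homeomorphism of `S_u` onto itself, it permutes the fibers of `f_u` by
`h_u[f_u⁻¹(t)] = f_u⁻¹(h t)`, and it fixes every `X_α` setwise. -/
theorem induced_homeo_fixes_Xseq (u : StoneCech ℕ)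
    (hu : ∀ n : ℕ, u ≠ stoneCechUnit n)
    (h : unitInterval ≃ₜ unitInterval) :
    ∃ e : (Su u) ≃ₜ (Su u),
      (∀ z : (Su u), (e z : StoneCech bS) = betaG h z.1) ∧
      (∀ t : unitInterval, e '' (fu u ⁻¹' {t}) = fu u ⁻¹' {h t}) ∧
      (∀ α : Ordinal, e '' Xseq u α = Xseq u α) := by
  refine ⟨eHom u h, fun z => rfl, eHom_fiber u h, ?_⟩
  intro α
  induction α using Ordinal.limitRecOn with
  | zero =>
    rw [Xseq_zero, Set.image_univ]
    exact (eHom u h).surjective.range_eq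
  | add_one o ih =>
    rw [Ordinal.add_one_eq_succ]
    set e := eHom u h
    rw [Xseq_succ, Set.image_diff e.injective, ih, Set.image_iUnion]
    congr 1
    have step : ∀ t : unitInterval,
        e '' relInt (Xseq u o) (Xseq u o ∩ fu u ⁻¹' {t}) =
          relInt (Xseq u o) (Xseq u o ∩ fu u ⁻¹' {h t}) := by
      intro t
      rw [image_relInt, ih, Set.image_inter e.injective, ih, eHom_fiber]
    calc ⋃ t, e '' relInt (Xseq u o) (Xseq u o ∩ fu u ⁻¹' {t})
        = ⋃ t, relInt (Xseq u o) (Xseq u o ∩ fu u ⁻¹' {h t}) := by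
          exact Set.iUnion_congr step
      _ = ⋃ t, relInt (Xseq u o) (Xseq u o ∩ fu u ⁻¹' {t}) :=
          h.surjective.iUnion_comp (fun t => relInt (Xseq u o) (Xseq u o ∩ fu u ⁻¹' {t}))
  | limit o ho ih =>
    rw [Xseq_limit u o ho, Set.image_iInter (eHom u h).bijective]
    exact Set.iInter_congr fun β => ih β.1 β.2

end
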